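/- Let y₁, …, y_n be i.i.d. uniform on [0,1] with n = H·c, and let y_{(kc)} be the (kc)-th order statistic for 1 ≤ k ≤ H − 1. For all H, c sufficiently large, there exists an absolute constant C > 0 such that for any ε > 1/(Hc − 1), P(y_{(kc)} > k/H + ε) ≤ C·H·√(Hc + 1)·exp(−(Hc + 1)·ε²/2). -/

import Mathlib

open MeasureTheory ProbabilityTheory

/-- The `k`-th order statistic (1-indexed) of a finite sample `v : Fin n → ℝ`:
the `k`-th smallest value. -/
noncomputable def orderStat {n : ℕ} (v : Fin n → ℝ) (k : ℕ) : ℝ :=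
  ((List.ofFn v).insertionSort (· ≤ ·)).getD (k - 1) 0

lemma orderStat_mem {n : ℕ} (v : Fin n → ℝ) (m : ℕ) (hm1 : 1 ≤ m) (hmn : m ≤ n) :
    ∃ i, orderStat v m = v i := by
  set l := (List.ofFn v).insertionSort (· ≤ ·) with hl
  have hlen : l.length = n := by
    rw [hl, List.length_insertionSort, List.length_ofFn]
  have hidx : m - 1 < l.length := by omega
  have hos : orderStat v m = l[m-1]'hidx := by
    rw [orderStat, ← hl, List.getD_eq_getElem _ _ hidx]
  have hmem : l[m-1]'hidx ∈ l := List.getElem_mem _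
  have hperm : List.Perm l (List.ofFn v) := List.perm_insertionSort _ _
  have hm : l[m-1]'hidx ∈ List.ofFn v := hperm.mem_iff.mp hmem
  rw [List.mem_ofFn] at hm
  obtain ⟨i, hi⟩ := hm
  exact ⟨i, by rw [hos, ← hi]⟩

lemma count_lt_of_orderStat {n : ℕ} (v : Fin n → ℝ) (m : ℕ) (t : ℝ)
    (hm1 : 1 ≤ m) (hmn : m ≤ n) (h : t < orderStat v m) :
    (Finset.univ.filter (fun i => v i ≤ t)).card < m := by
  classical
  set l := (List.ofFn v).insertionSort (· ≤ ·) with hl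
  have hlen : l.length = n := by
    rw [hl, List.length_insertionSort, List.length_ofFn]
  have hsorted : l.Pairwise (· ≤ ·) := List.pairwise_insertionSort _ _
  have hidx : m - 1 < l.length := by omega
  have hos : orderStat v m = l[m-1]'hidx := by
    rw [orderStat, ← hl, List.getD_eq_getElem _ _ hidx]
  have hcount : (Finset.univ.filter (fun i => v i ≤ t)).card
      = l.countP (fun x => decide (x ≤ t)) := by
    have hperm : List.Perm l (List.ofFn v) := List.perm_insertionSort _ _
    rw [hperm.countP_eq, List.ofFn_eq_map, List.countP_map]
    rw [Fin.univ_def]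
    simp [Finset.filter, List.countP_eq_length_filter, Function.comp]
    rfl
  rw [hcount]
  by_contra hc
  push_neg at hc
  have hnle : ¬ (l[m-1]'hidx ≤ t) := not_le.mpr (hos ▸ h)
  have hsplit : l = l.take (m-1) ++ l.drop (m-1) := (List.take_append_drop _ _).symm
  have hdrop : ∀ x ∈ l.drop (m-1), ¬ (x ≤ t) := by
    intro x hx
    rw [List.mem_iff_get] at hx
    obtain ⟨j, rfl⟩ := hx
    have hj : (m-1) + (j : ℕ) < l.length := by
      have := j.2; simp [List.length_drop] at this ⊢; omega
    have hget : (l.drop (m-1)).get j = l.get ⟨(m-1) + (j : ℕ), hj⟩ := by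
      simp [List.getElem_drop]
    have h1 : l.get ⟨m-1, hidx⟩ ≤ l.get ⟨(m-1) + (j : ℕ), hj⟩ := by
      apply hsorted.rel_get_of_le
      simp [Fin.le_def]
    intro hle
    apply hnle
    calc l[m-1]'hidx = l.get ⟨m-1, hidx⟩ := by simp
    _ ≤ (l.drop (m-1)).get j := by rw [hget]; exact h1
    _ ≤ t := hle
  have hc2 : l.countP (fun x => decide (x ≤ t)) =
      (l.take (m-1)).countP (fun x => decide (x ≤ t)) +
      (l.drop (m-1)).countP (fun x => decide (x ≤ t)) := by
    conv_lhs => rw [hsplit]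
    rw [List.countP_append]
  have h0 : (l.drop (m-1)).countP (fun x => decide (x ≤ t)) = 0 := by
    rw [List.countP_eq_zero]
    intro x hx
    simpa using hdrop x hx
  have h1 : (l.take (m-1)).countP (fun x => decide (x ≤ t)) ≤ m - 1 := by
    calc _ ≤ (l.take (m-1)).length := List.countP_le_length
    _ ≤ m - 1 := by simp [List.length_take]
  omega

lemma ite_eq_indicator_add {Ω : Type} {W : Ω → ℝ} (t a b : ℝ) :
    (fun ω => if W ω ≤ t then a else b)
      = fun ω => (W ⁻¹' Set.Iic t).indicator (fun _ => a - b) ω + b := by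
  funext ω
  by_cases h : W ω ≤ t <;> simp [Set.indicator, h]

lemma integrable_ite' {Ω : Type} [MeasurableSpace Ω] {μ : Measure Ω} [IsFiniteMeasure μ]
    {W : Ω → ℝ} (hW : Measurable W) (t a b : ℝ) :
    Integrable (fun ω => if W ω ≤ t then a else b) μ := by
  rw [ite_eq_indicator_add]
  exact (((integrable_const (a - b)).indicator (hW measurableSet_Iic))).add (integrable_const b)

lemma integral_ite' {Ω : Type} [MeasurableSpace Ω] {μ : Measure Ω} [IsProbabilityMeasure μ]
    {W : Ω → ℝ} (hW : Measurable W) (t a b : ℝ) :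
    ∫ ω, (if W ω ≤ t then a else b) ∂μ = (a - b) * (μ (W ⁻¹' Set.Iic t)).toReal + b := by
  rw [ite_eq_indicator_add]
  rw [integral_add (((integrable_const (a - b)).indicator (hW measurableSet_Iic)))
    (integrable_const b)]
  rw [integral_indicator (hW measurableSet_Iic), integral_const, integral_const]
  simp [smul_eq_mul, mul_comm]
  exact Or.inl rfl

lemma exp_mul_le_cosh {z s : ℝ} (h1 : -1 ≤ z) (h2 : z ≤ 1) :
    Real.exp (s * z) ≤ Real.cosh s + z * Real.sinh s := by
  have ha : (0:ℝ) ≤ (1 + z) / 2 := by linarith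
  have hb : (0:ℝ) ≤ (1 - z) / 2 := by linarith
  have hab : (1 + z) / 2 + (1 - z) / 2 = 1 := by ring
  have hcx := convexOn_exp.2 (Set.mem_univ s) (Set.mem_univ (-s)) ha hb hab
  simp only [smul_eq_mul] at hcx
  calc Real.exp (s * z) = Real.exp ((1+z)/2 * s + (1-z)/2 * (-s)) := by ring_nf
  _ ≤ (1+z)/2 * Real.exp s + (1-z)/2 * Real.exp (-s) := hcx
  _ = Real.cosh s + z * Real.sinh s := by rw [Real.cosh_eq, Real.sinh_eq]; ring

lemma mgf_one_le {Ω : Type} [MeasurableSpace Ω] {μ : Measure Ω} [IsProbabilityMeasure μ]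
    {W : Ω → ℝ} (hW : Measurable W) {t : ℝ} (s : ℝ)
    (ht0 : 0 ≤ t) (ht1 : t ≤ 1) (hA : μ (W ⁻¹' Set.Iic t) = ENNReal.ofReal t) :
    mgf (fun ω => t - (if W ω ≤ t then (1:ℝ) else 0)) μ s ≤ Real.exp (s ^ 2 / 2) := by
  have hrw : (fun ω => Real.exp (s * (t - (if W ω ≤ t then (1:ℝ) else 0))))
      = fun ω => if W ω ≤ t then Real.exp (s * (t - 1)) else Real.exp (s * t) := by
    funext ω; by_cases h : W ω ≤ t <;> simp [h]
  have htr : (μ (W ⁻¹' Set.Iic t)).toReal = t := by rw [hA, ENNReal.toReal_ofReal ht0]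
  have hmgf : mgf (fun ω => t - (if W ω ≤ t then (1:ℝ) else 0)) μ s
      = (Real.exp (s * (t-1)) - Real.exp (s * t)) * t + Real.exp (s * t) := by
    rw [mgf]
    simp only [hrw]
    rw [integral_ite' hW, htr]
  rw [hmgf]
  have e1 : Real.exp (s * (t - 1)) ≤ Real.cosh s + (t - 1) * Real.sinh s :=
    exp_mul_le_cosh (by linarith) (by linarith)
  have e2 : Real.exp (s * t) ≤ Real.cosh s + t * Real.sinh s :=
    exp_mul_le_cosh (by linarith) (by linarith)
  have hcosh : Real.cosh s ≤ Real.exp (s ^ 2 / 2) := Real.cosh_le_exp_half_sq s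
  nlinarith [e1, e2, hcosh]

lemma volume_Icc01 : (volume (Set.Icc (0:ℝ) 1)) = 1 := by
  rw [Real.volume_Icc]; norm_num

lemma uniform_Iic {Ω : Type} [MeasurableSpace Ω] {μ : Measure Ω} {W : Ω → ℝ}
    (hu : pdf.IsUniform W (Set.Icc (0:ℝ) 1) μ) {t : ℝ} (ht0 : 0 ≤ t) (ht1 : t ≤ 1) :
    μ (W ⁻¹' Set.Iic t) = ENNReal.ofReal t := by
  rw [pdf.IsUniform.measure_preimage (by rw [volume_Icc01]; norm_num)
    (by rw [volume_Icc01]; norm_num) hu measurableSet_Iic]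
  have hset : Set.Icc (0:ℝ) 1 ∩ Set.Iic t = Set.Icc 0 t := by
    ext x
    simp only [Set.mem_inter_iff, Set.mem_Icc, Set.mem_Iic]
    constructor
    · rintro ⟨⟨h1, h2⟩, h3⟩; exact ⟨h1, h3⟩
    · rintro ⟨h1, h2⟩; exact ⟨⟨h1, le_trans h2 ht1⟩, h2⟩
  rw [hset, volume_Icc01, Real.volume_Icc]
  simp

lemma uniform_gt_one {Ω : Type} [MeasurableSpace Ω] {μ : Measure Ω} {W : Ω → ℝ}
    (hu : pdf.IsUniform W (Set.Icc (0:ℝ) 1) μ) :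
    μ {ω | 1 < W ω} = 0 := by
  have h1 : {ω | 1 < W ω} = W ⁻¹' Set.Ioi 1 := rfl
  rw [h1, pdf.IsUniform.measure_preimage (by rw [volume_Icc01]; norm_num)
    (by rw [volume_Icc01]; norm_num) hu measurableSet_Ioi]
  have h2 : Set.Icc (0:ℝ) 1 ∩ Set.Ioi 1 = ∅ := by
    ext x; simp only [Set.mem_inter_iff, Set.mem_Icc, Set.mem_Ioi, Set.mem_empty_iff_false,
      iff_false, not_and]
    rintro ⟨_, h2⟩ h3; linarith
  rw [h2]; simp

set_option maxHeartbeats 1000000 in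
theorem stmt_9 :
    ∃ C : ℝ, 0 < C ∧ ∃ H₀ c₀ : ℕ, ∀ H c : ℕ, H₀ ≤ H → c₀ ≤ c →
      ∀ (Ω : Type) (_ : MeasurableSpace Ω) (μ : Measure Ω), IsProbabilityMeasure μ →
      ∀ (y : Fin (H * c) → Ω → ℝ), (∀ i, Measurable (y i)) →
        iIndepFun y μ →
        (∀ i, pdf.IsUniform (y i) (Set.Icc (0 : ℝ) 1) μ) →
        ∀ k : ℕ, 1 ≤ k → k ≤ H - 1 →
        ∀ ε : ℝ, 1 / ((H : ℝ) * c - 1) < ε →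
          μ {ω | (k : ℝ) / H + ε < orderStat (fun i => y i ω) (k * c)} ≤
            ENNReal.ofReal (C * H * Real.sqrt ((H : ℝ) * c + 1) *
              Real.exp (-((H : ℝ) * c + 1) * ε ^ 2 / 2)) := by
  refine ⟨2, by norm_num, 2, 2, ?_⟩
  intro H c hH hc Ω mΩ μ hprob y hmeas hindep hunif k hk1 hk2 ε hε
  have hH1 : (1:ℝ) ≤ H := by exact_mod_cast le_trans (by norm_num) hH
  have hHR : (2:ℝ) ≤ H := by exact_mod_cast hH
  have hcR : (2:ℝ) ≤ c := by exact_mod_cast hc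
  set N : ℝ := (H:ℝ) * c with hN
  have hN4 : (4:ℝ) ≤ N := by nlinarith
  have hNpos : (0:ℝ) < N := by linarith
  have hεpos : 0 < ε := by
    refine lt_trans ?_ hε
    have : (0:ℝ) < N - 1 := by linarith
    positivity
  have hkc1 : 1 ≤ k * c := Nat.mul_pos hk1 (by omega)
  have hkcn : k * c ≤ H * c := Nat.mul_le_mul_right c (le_trans hk2 (Nat.sub_le H 1))
  set t : ℝ := (k:ℝ)/H + ε with hT
  have hkH0 : (0:ℝ) ≤ (k:ℝ)/H := by positivity
  have hsqrt1 : (1:ℝ) ≤ Real.sqrt (N + 1) := by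
    have h := Real.sqrt_le_sqrt (show (1:ℝ) ≤ N + 1 by linarith)
    rwa [Real.sqrt_one] at h
  have hRHSpos : (0:ℝ) ≤ 2 * H * Real.sqrt (N + 1) * Real.exp (-(N + 1) * ε ^ 2 / 2) := by
    positivity
  by_cases ht1 : t ≤ 1
  · -- main case
    have ht0 : 0 ≤ t := by positivity
    have hεle1 : ε ≤ 1 := by
      have : (k:ℝ)/H + ε ≤ 1 := ht1
      linarith
    set Z : Fin (H * c) → Ω → ℝ := fun i ω => t - (if y i ω ≤ t then (1:ℝ) else 0) with hZ
    have hZmeas : ∀ i, Measurable (Z i) := by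
      intro i
      exact measurable_const.sub
        (Measurable.ite (hmeas i measurableSet_Iic) measurable_const measurable_const)
    have hZindep : iIndepFun Z μ := by
      have := hindep.comp (g := fun _ (x : ℝ) => t - (if x ≤ t then (1:ℝ) else 0))
        (fun i => measurable_const.sub
          (Measurable.ite measurableSet_Iic measurable_const measurable_const))
      exact this
    set a : ℝ := 1 + N * ε with ha
    have ha0 : 0 < a := by positivity
    set s : ℝ := a / N with hs
    have hs0 : 0 ≤ s := by positivity
    have hintZ : ∀ i, Integrable (fun ω => Real.exp (s * Z i ω)) μ := by
      intro i
      have hrw : (fun ω => Real.exp (s * Z i ω))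
          = fun ω => if y i ω ≤ t then Real.exp (s * (t - 1)) else Real.exp (s * t) := by
        funext ω; by_cases h : y i ω ≤ t <;> simp [hZ, h]
      rw [hrw]
      exact integrable_ite' (hmeas i) t _ _
    have hint_sum : Integrable (fun ω => Real.exp (s * (∑ i, Z i) ω)) μ :=
      hZindep.integrable_exp_mul_sum hZmeas (fun i _ => hintZ i)
    have hmgf_le : mgf (∑ i, Z i) μ s ≤ Real.exp (N * (s ^ 2 / 2)) := by
      rw [hZindep.mgf_sum hZmeas]
      calc ∏ i, mgf (Z i) μ s ≤ ∏ _i : Fin (H * c), Real.exp (s ^ 2 / 2) := by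
            apply Finset.prod_le_prod (fun i _ => mgf_nonneg)
            intro i _
            exact mgf_one_le (hmeas i) s ht0 ht1 (uniform_Iic (hunif i) ht0 ht1)
      _ = Real.exp (s ^ 2 / 2) ^ (H * c) := by
            rw [Finset.prod_const, Finset.card_univ, Fintype.card_fin]
      _ = Real.exp (N * (s ^ 2 / 2)) := by
            rw [← Real.exp_nat_mul]
            congr 1
            push_cast [hN]
            ring
    have hch := measure_ge_le_exp_mul_mgf (X := ∑ i, Z i) (μ := μ) a hs0 hint_sum
    have hsub : {ω | t < orderStat (fun i => y i ω) (k * c)} ⊆ {ω | a ≤ (∑ i, Z i) ω} := by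
      intro ω hω
      have hcard := count_lt_of_orderStat (fun i => y i ω) (k * c) t hkc1 hkcn hω
      have hcardR : ((Finset.univ.filter (fun i => y i ω ≤ t)).card : ℝ) ≤ (k:ℝ) * c - 1 := by
        have : (Finset.univ.filter (fun i => y i ω ≤ t)).card + 1 ≤ k * c := hcard
        have := (Nat.cast_le (α := ℝ)).mpr this
        push_cast at this
        linarith
      have hsum : (∑ i, Z i) ω
          = N * t - ((Finset.univ.filter (fun i => y i ω ≤ t)).card : ℝ) := by
        rw [Finset.sum_apply]
        simp only [hZ]
        rw [Finset.sum_sub_distrib, Finset.sum_const, Finset.card_univ, Fintype.card_fin,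
          Finset.sum_boole]
        push_cast [hN]
        ring_nf
      have hNt : N * t = (k:ℝ) * c + N * ε := by
        rw [hT, hN]
        field_simp
      rw [Set.mem_setOf_eq, hsum, hNt, ha]
      linarith
    -- convert to ENNReal
    have hne : μ {ω | t < orderStat (fun i => y i ω) (k * c)} ≠ ⊤ := measure_ne_top μ _
    have hmono := measure_mono (μ := μ) hsub
    have hne2 : μ {ω | a ≤ (∑ i, Z i) ω} ≠ ⊤ := measure_ne_top μ _
    have hreal : Real.exp (-s * a) * mgf (∑ i, Z i) μ s
        ≤ 2 * H * Real.sqrt (N + 1) * Real.exp (-(N + 1) * ε ^ 2 / 2) := by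
      have step1 : Real.exp (-s * a) * mgf (∑ i, Z i) μ s
          ≤ Real.exp (-s * a) * Real.exp (N * (s ^ 2 / 2)) := by
        exact mul_le_mul_of_nonneg_left hmgf_le (Real.exp_pos _).le
      have step2 : Real.exp (-s * a) * Real.exp (N * (s ^ 2 / 2))
          = Real.exp (- a ^ 2 / (2 * N)) := by
        rw [← Real.exp_add]
        congr 1
        rw [hs]
        field_simp
        ring
      have haN : N * ε ≤ a := by rw [ha]; linarith
      have hsq : (N * ε) ^ 2 ≤ a ^ 2 := by
        apply pow_le_pow_left₀ (by positivity) haN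
      have step3 : - a ^ 2 / (2 * N) ≤ - (N * ε ^ 2) / 2 := by
        rw [div_le_div_iff₀ (by positivity) (by norm_num)]
        nlinarith
      have step4 : Real.exp (- (N * ε ^ 2) / 2)
          = Real.exp (-(N + 1) * ε ^ 2 / 2) * Real.exp (ε ^ 2 / 2) := by
        rw [← Real.exp_add]; congr 1; ring
      have hexp_half : Real.exp ((1:ℝ)/2) < 2 := by
        have hsq2 : Real.exp ((1:ℝ)/2) ^ 2 = Real.exp 1 := by
          rw [sq, ← Real.exp_add]; norm_num
        nlinarith [Real.exp_one_lt_d9, Real.exp_pos ((1:ℝ)/2)]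
      have hexp_eps : Real.exp (ε ^ 2 / 2) ≤ 2 := by
        have : ε ^ 2 ≤ 1 := by nlinarith
        calc Real.exp (ε ^ 2 / 2) ≤ Real.exp ((1:ℝ)/2) := by
              apply Real.exp_le_exp.mpr; linarith
        _ ≤ 2 := hexp_half.le
      calc Real.exp (-s * a) * mgf (∑ i, Z i) μ s
          ≤ Real.exp (- a ^ 2 / (2 * N)) := by rw [← step2]; exact step1
      _ ≤ Real.exp (- (N * ε ^ 2) / 2) := Real.exp_le_exp.mpr step3
      _ = Real.exp (-(N + 1) * ε ^ 2 / 2) * Real.exp (ε ^ 2 / 2) := step4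
      _ ≤ Real.exp (-(N + 1) * ε ^ 2 / 2) * 2 :=
            mul_le_mul_of_nonneg_left hexp_eps (Real.exp_pos _).le
      _ ≤ 2 * H * Real.sqrt (N + 1) * Real.exp (-(N + 1) * ε ^ 2 / 2) := by
            have hHs : (2:ℝ) ≤ 2 * H * Real.sqrt (N + 1) := by nlinarith
            nlinarith [Real.exp_pos (-(N + 1) * ε ^ 2 / 2)]
    calc μ {ω | t < orderStat (fun i => y i ω) (k * c)}
        ≤ μ {ω | a ≤ (∑ i, Z i) ω} := hmono
    _ = ENNReal.ofReal ((μ {ω | a ≤ (∑ i, Z i) ω}).toReal) := (ENNReal.ofReal_toReal hne2).symm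
    _ ≤ ENNReal.ofReal (2 * H * Real.sqrt (N + 1) * Real.exp (-(N + 1) * ε ^ 2 / 2)) :=
        ENNReal.ofReal_le_ofReal (le_trans hch hreal)
  · -- t > 1 : the event is null
    push_neg at ht1
    have hsub : {ω | t < orderStat (fun i => y i ω) (k * c)} ⊆ ⋃ i, {ω | 1 < y i ω} := by
      intro ω hω
      obtain ⟨i, hi⟩ := orderStat_mem (fun i => y i ω) (k * c) hkc1 hkcn
      refine Set.mem_iUnion.mpr ⟨i, ?_⟩
      have : t < orderStat (fun i => y i ω) (k * c) := hω
      rw [hi] at this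
      exact lt_trans ht1 this
    have hnull : μ (⋃ i, {ω | 1 < y i ω}) = 0 :=
      measure_iUnion_null (fun i => uniform_gt_one (hunif i))
    calc μ {ω | t < orderStat (fun i => y i ω) (k * c)}
        ≤ μ (⋃ i, {ω | 1 < y i ω}) := measure_mono hsub
    _ = 0 := hnull
    _ ≤ _ := zero_le
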